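/- Let m > 0, E ∈ ℝ, V : ℝ → ℝ, and let f : ℝ → ℝ be continuously differentiable with f′(ψ)² + f(ψ)² = 2m(E − V(ψ)) for all ψ (the ordinary differential equation (13) of the paper). Define S(R,ψ) = R f(ψ) − ∫₀^ψ l(t) f′(t) dt. Then for every (R,ψ) with R ≠ l(ψ), S satisfies the Hamilton–Jacobi equation (11): (1/(2m))·[(∂S/∂R(R,ψ))² + (R − l(ψ))⁻² (∂S/∂ψ(R,ψ))²] + V(ψ) = E. -/

import Mathlib

open Real

/-- The separated solution `S(R,ψ) = R f(ψ) − ∫₀^ψ l(t) f′(t) dt` of the paper. -/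
noncomputable def S (l f : ℝ → ℝ) (R ψ : ℝ) : ℝ :=
  R * f ψ - ∫ t in (0:ℝ)..ψ, l t * deriv f t

/-- If `f` solves the ordinary differential equation (13), `f′² + f² = 2m(E − V)`,
then `S` solves the Hamilton–Jacobi equation (11) in the metric
`dR² + (R − l(ψ))² dψ²`. -/
theorem stmt_15 (l : ℝ → ℝ) (hl : Continuous l) (m E : ℝ) (hm : 0 < m)
    (V : ℝ → ℝ) (f : ℝ → ℝ) (hf : ContDiff ℝ 1 f)
    (hODE : ∀ ψ : ℝ, (deriv f ψ) ^ 2 + (f ψ) ^ 2 = 2 * m * (E - V ψ))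
    (R ψ : ℝ) (h : R ≠ l ψ) :
    1 / (2 * m) * ((deriv (fun r => S l f r ψ) R) ^ 2 +
        (deriv (fun p => S l f R p) ψ) ^ 2 / (R - l ψ) ^ 2) + V ψ = E := by
  have hf' : Continuous (deriv f) := hf.continuous_deriv le_rfl
  have hcont : Continuous fun t => l t * deriv f t := hl.mul hf'
  have hdR : deriv (fun r => S l f r ψ) R = f ψ := by
    have h1 : HasDerivAt (fun r : ℝ => r * f ψ) (f ψ) R := by
      simpa using (hasDerivAt_id R).mul_const (f ψ)
    exact ((h1.sub_const _).congr_deriv rfl).deriv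
  have hfd : HasDerivAt f (deriv f ψ) ψ :=
    (hf.differentiable one_ne_zero ψ).hasDerivAt
  have hdψ : deriv (fun p => S l f R p) ψ = (R - l ψ) * deriv f ψ := by
    have h1 : HasDerivAt (fun p : ℝ => R * f p) (R * deriv f ψ) ψ := hfd.const_mul R
    have h2 : HasDerivAt (fun p : ℝ => ∫ t in (0:ℝ)..p, l t * deriv f t)
        (l ψ * deriv f ψ) ψ :=
      intervalIntegral.integral_hasDerivAt_right (hcont.intervalIntegrable 0 ψ)
        (hcont.stronglyMeasurableAtFilter _ _) hcont.continuousAt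
    have h3 : HasDerivAt (fun p => S l f R p) (R * deriv f ψ - l ψ * deriv f ψ) ψ := by
      exact h1.sub h2
    rw [h3.deriv]; ring
  have hR : (R - l ψ) ≠ 0 := sub_ne_zero.mpr h
  rw [hdR, hdψ]
  have key := hODE ψ
  field_simp
  nlinarith [sq_nonneg (R - l ψ), sq_nonneg (deriv f ψ)]
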